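/- In the hitting-set graph G constructed from an instance (U, F_1, …, F_m) with |U| = n, if U' ⊆ U is a hitting set (i.e., U' ∩ F_i ≠ ∅ for every i ∈ {1,…,m}) with |U'| = q, then the set S = {l^c_u : u ∈ U ∖ U', c ∈ {1,2}} ∪ {r_u : u ∈ U'} ∪ R_2 is a minimal vertex cover of G of size (n − q) + n + m(n+1). -/

import Mathlib

/-- Vertices of the hitting-set graph built from an instance with ground set
`Fin n` and sets `F_1, …, F_m`:  `l c u` (for `c ∈ Fin 2`) are the vertices
`l^1_u, l^2_u`, `r1 u` is `r_u`, and `r2 c i` (for `c ∈ Fin (n+1)`) is `r^c_i`. -/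
inductive HV (n m : ℕ) : Type where
  | l : Fin 2 → Fin n → HV n m
  | r1 : Fin n → HV n m
  | r2 : Fin (n + 1) → Fin m → HV n m

/-- The base relation inducing the edges of the hitting-set graph:
`{l^c_u, r_u}` for all `u, c`, and `{l^1_u, r^c_i}` whenever `u ∈ F i`. -/
def hsRel {n m : ℕ} (F : Fin m → Finset (Fin n)) : HV n m → HV n m → Prop
  | .l _ u, .r1 u' => u = u'
  | .l c u, .r2 _ i => c = 0 ∧ u ∈ F i
  | _, _ => False

/-- The hitting-set graph of the instance `F`. -/
def hsGraph {n m : ℕ} (F : Fin m → Finset (Fin n)) : SimpleGraph (HV n m) :=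
  SimpleGraph.fromRel (hsRel F)

/-- The left side `L = {l^c_u}`. -/
def Lset (n m : ℕ) : Set (HV n m) := {x | ∃ c u, x = HV.l c u}

/-- `R_1 = {r_u}`. -/
def R1set (n m : ℕ) : Set (HV n m) := {x | ∃ u, x = HV.r1 u}

/-- `R_2 = {r^c_i}`. -/
def R2set (n m : ℕ) : Set (HV n m) := {x | ∃ c i, x = HV.r2 c i}

/-- `S` is a vertex cover of `G`: it contains at least one endpoint of every edge. -/
def IsVC {α : Type*} (G : SimpleGraph α) (S : Set α) : Prop :=
  ∀ ⦃u v : α⦄, G.Adj u v → u ∈ S ∨ v ∈ S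

/-- `S` is a minimal vertex cover of `G`. -/
def IsMinVC {α : Type*} (G : SimpleGraph α) (S : Set α) : Prop :=
  IsVC G S ∧ ∀ T : Set α, T ⊂ S → ¬ IsVC G T


deriving instance DecidableEq for HV

lemma stmt10_aux {n m : ℕ} (U' : Finset (Fin n)) :
    ({x | ∃ c u, u ∉ U' ∧ x = HV.l c u} ∪
      {x | ∃ u ∈ U', x = HV.r1 u} ∪ R2set n m : Set (HV n m)) =
    ↑((Finset.image (fun p : Fin 2 × Fin n => HV.l p.1 p.2) (Finset.univ ×ˢ U'ᶜ) ∪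
       Finset.image HV.r1 U' ∪
       Finset.image (fun p : Fin (n+1) × Fin m => HV.r2 p.1 p.2) Finset.univ :
       Finset (HV n m))) := by
  ext x
  cases x <;> simp [R2set, eq_comm]
  rename_i c u
  fin_cases c <;> simp

/-- If `U' ⊆ U` is a hitting set of size `q`, then
`S = {l^c_u : u ∉ U'} ∪ {r_u : u ∈ U'} ∪ R_2` is a minimal vertex cover of the
hitting-set graph, of size `(n - q) + n + m(n+1)`. -/
theorem stmt10 {n m : ℕ} (F : Fin m → Finset (Fin n))
    (U' : Finset (Fin n)) (hU' : ∀ i : Fin m, ∃ u ∈ U', u ∈ F i)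
    (q : ℕ) (hq : q = U'.card)
    (S : Set (HV n m))
    (hS : S = {x | ∃ c u, u ∉ U' ∧ x = HV.l c u} ∪
              {x | ∃ u ∈ U', x = HV.r1 u} ∪ R2set n m) :
    IsMinVC (hsGraph F) S ∧ S.ncard = (n - q) + n + m * (n + 1) := by
  subst hS hq
  have memL : ∀ (c : Fin 2) (u : Fin n),
      HV.l c u ∈ ({x | ∃ c u, u ∉ U' ∧ x = HV.l c u} ∪
        {x | ∃ u ∈ U', x = HV.r1 u} ∪ R2set n m : Set (HV n m)) ↔ u ∉ U' := by
    intro c u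
    simp [R2set, eq_comm]
    fin_cases c <;> simp
  have memR1 : ∀ (u : Fin n),
      HV.r1 u ∈ ({x | ∃ c u, u ∉ U' ∧ x = HV.l c u} ∪
        {x | ∃ u ∈ U', x = HV.r1 u} ∪ R2set n m : Set (HV n m)) ↔ u ∈ U' := by
    intro u
    simp [R2set, eq_comm]
  have memR2 : ∀ (c : Fin (n+1)) (i : Fin m),
      HV.r2 c i ∈ ({x | ∃ c u, u ∉ U' ∧ x = HV.l c u} ∪
        {x | ∃ u ∈ U', x = HV.r1 u} ∪ R2set n m : Set (HV n m)) := by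
    intro c i
    simp [R2set]
  have key : ∀ a b : HV n m, hsRel F a b →
      a ∈ ({x | ∃ c u, u ∉ U' ∧ x = HV.l c u} ∪
        {x | ∃ u ∈ U', x = HV.r1 u} ∪ R2set n m : Set (HV n m)) ∨
      b ∈ ({x | ∃ c u, u ∉ U' ∧ x = HV.l c u} ∪
        {x | ∃ u ∈ U', x = HV.r1 u} ∪ R2set n m : Set (HV n m)) := by
    intro a b h
    match a, b with
    | .l c u, .r1 u' =>
      cases h
      by_cases hu : u ∈ U'
      · right; exact (memR1 u).2 hu
      · left; exact (memL c u).2 hu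
    | .l c u, .r2 c' i => right; exact memR2 c' i
    | .r1 _, .l _ _ => exact h.elim
    | .r2 _ _, .l _ _ => exact h.elim
    | .l _ _, .l _ _ => exact h.elim
    | .r1 _, .r1 _ => exact h.elim
    | .r1 _, .r2 _ _ => exact h.elim
    | .r2 _ _, .r1 _ => exact h.elim
    | .r2 _ _, .r2 _ _ => exact h.elim
  constructor
  · constructor
    · intro a b hab
      rw [hsGraph, SimpleGraph.fromRel_adj] at hab
      rcases hab.2 with h | h
      · exact key a b h
      · exact (key b a h).symm
    · intro T hT hTVC
      obtain ⟨v, hvS, hvT⟩ := Set.exists_of_ssubset hT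
      have hTS := hT.1
      have adjLR1 : ∀ (c : Fin 2) (u : Fin n), (hsGraph F).Adj (HV.l c u) (HV.r1 u) := by
        intro c u
        rw [hsGraph, SimpleGraph.fromRel_adj]
        exact ⟨by simp, Or.inl rfl⟩
      match v, hvS, hvT with
      | .l c u, hvS, hvT =>
        have hu : u ∉ U' := (memL c u).1 hvS
        rcases hTVC (adjLR1 c u) with h | h
        · exact hvT h
        · exact hu ((memR1 u).1 (hTS h))
      | .r1 u, hvS, hvT =>
        have hu : u ∈ U' := (memR1 u).1 hvS
        rcases hTVC (adjLR1 0 u) with h | h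
        · exact ((memL 0 u).1 (hTS h)) hu
        · exact hvT h
      | .r2 c i, hvS, hvT =>
        obtain ⟨u, huU, huF⟩ := hU' i
        have hadj : (hsGraph F).Adj (HV.l 0 u) (HV.r2 c i) := by
          rw [hsGraph, SimpleGraph.fromRel_adj]
          exact ⟨by simp, Or.inl ⟨rfl, huF⟩⟩
        rcases hTVC hadj with h | h
        · exact ((memL 0 u).1 (hTS h)) huU
        · exact hvT h
  · rw [stmt10_aux U', Set.ncard_coe_finset]
    have hql : U'.card ≤ n := by
      simpa using Finset.card_le_card (Finset.subset_univ U')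
    have hinjl : Function.Injective (fun p : Fin 2 × Fin n => (HV.l p.1 p.2 : HV n m)) := by
      intro p q h
      simp only [HV.l.injEq] at h
      exact Prod.ext h.1 h.2
    have hinjr2 : Function.Injective (fun p : Fin (n+1) × Fin m => (HV.r2 p.1 p.2 : HV n m)) := by
      intro p q h
      simp only [HV.r2.injEq] at h
      exact Prod.ext h.1 h.2
    have hinjr1 : Function.Injective (HV.r1 : Fin n → HV n m) := by
      intro a b h
      injection h
    have hd1 : Disjoint
        (Finset.image (fun p : Fin 2 × Fin n => (HV.l p.1 p.2 : HV n m)) (Finset.univ ×ˢ U'ᶜ))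
        (Finset.image HV.r1 U') := by
      rw [Finset.disjoint_left]; rintro a ha hb
      simp only [Finset.mem_image] at ha hb
      obtain ⟨p, _, rfl⟩ := ha
      obtain ⟨u, _, h⟩ := hb
      cases h
    have hd2 : Disjoint
        (Finset.image (fun p : Fin 2 × Fin n => (HV.l p.1 p.2 : HV n m)) (Finset.univ ×ˢ U'ᶜ) ∪
          Finset.image HV.r1 U')
        (Finset.image (fun p : Fin (n+1) × Fin m => HV.r2 p.1 p.2) Finset.univ) := by
      rw [Finset.disjoint_left]; rintro a ha hb
      simp only [Finset.mem_union, Finset.mem_image] at ha hb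
      obtain ⟨p, _, rfl⟩ := hb
      rcases ha with ⟨p, _, h⟩ | ⟨u, _, h⟩ <;> cases h
    rw [Finset.card_union_of_disjoint hd2, Finset.card_union_of_disjoint hd1,
      Finset.card_image_of_injective _ hinjl,
      Finset.card_image_of_injective _ hinjr2,
      Finset.card_image_of_injective _ hinjr1,
      Finset.card_product, Finset.card_compl]
    simp only [Finset.card_univ, Fintype.card_fin, Fintype.card_prod]
    rw [Nat.mul_comm (n+1) m]
    omega
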